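/- Let R be a commutative ring, let n ≥ 1 be a natural number, and let y, x₁, x₂, y₁, …, y_{n+1}, c₂ be elements of R satisfying: x₁³ = 0, x₂³ = 0, y_j³ = 0 for every j; Σ_{j=1}^{n+1} y_j = 0; Σ_{1 ≤ j < k ≤ n+1} y_j·y_k = c₂; and y^{n+1} + c₂·y^{n-1} = 0. Then Σ_{j=1}^{n+1} (y_j + y)^{n+2} + x₁^{n+2} + x₂^{n+2} = −(n+1)·(n+3)·c₂·yⁿ. -/

import Mathlib

private lemma aux_pow_expand {R : Type*} [CommRing R] (a y : R) (ha : a ^ 3 = 0)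
    (m : ℕ) (hm : 2 ≤ m) :
    (a + y) ^ m = y ^ m + m * a * y ^ (m - 1) + (m.choose 2) * a ^ 2 * y ^ (m - 2) := by
  rw [add_pow]
  have hsub : Finset.range 3 ⊆ Finset.range (m + 1) := Finset.range_subset_range.2 (by omega)
  rw [← Finset.sum_subset hsub (by
    intro k hk hk3
    simp only [Finset.mem_range] at hk hk3
    have : a ^ k = a ^ 3 * a ^ (k - 3) := by rw [← pow_add]; congr 1; omega
    rw [this, ha, zero_mul, zero_mul, zero_mul])]
  rw [show (3 : ℕ) = 2 + 1 from rfl, Finset.sum_range_succ, Finset.sum_range_succ,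
    Finset.sum_range_one]
  simp only [pow_zero, Nat.choose_zero_right, Nat.choose_one_right, Nat.sub_zero, pow_one,
    Nat.cast_one, one_mul, mul_one]
  ring

/-- In any commutative ring, if `x₁³ = x₂³ = 0`, each `y_j³ = 0`,
`Σ_j y_j = 0`, `Σ_{j<k} y_j y_k = c₂`, and `y^(n+1) + c₂·y^(n-1) = 0`, then
`Σ_j (y_j + y)^(n+2) + x₁^(n+2) + x₂^(n+2) = −(n+1)(n+3)·c₂·yⁿ`. -/
theorem sum_chern_root_powers_projectivisation {R : Type*} [CommRing R] (n : ℕ) (hn : 1 ≤ n)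
    (y x₁ x₂ c₂ : R) (Y : Fin (n + 1) → R)
    (hx₁ : x₁ ^ 3 = 0) (hx₂ : x₂ ^ 3 = 0) (hY : ∀ j, Y j ^ 3 = 0)
    (hc₁ : ∑ j, Y j = 0)
    (hc₂ : ∑ j, ∑ k ∈ Finset.Ioi j, Y j * Y k = c₂)
    (hrel : y ^ (n + 1) + c₂ * y ^ (n - 1) = 0) :
    (∑ j, (Y j + y) ^ (n + 2)) + x₁ ^ (n + 2) + x₂ ^ (n + 2) =
      -((n + 1 : R) * (n + 3 : R)) * c₂ * y ^ n := by
  -- nilpotent corner classes vanish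
  have hxpow : ∀ x : R, x ^ 3 = 0 → x ^ (n + 2) = 0 := by
    intro x hx
    rw [show n + 2 = 3 + (n - 1) by omega, pow_add, hx, zero_mul]
  rw [hxpow x₁ hx₁, hxpow x₂ hx₂, add_zero, add_zero]
  -- sum of squares of the roots
  have hsq : ∑ j, Y j ^ 2 = -(2 * c₂) := by
    have hexp : (∑ j, Y j) * (∑ k, Y k)
        = ∑ j, Y j ^ 2 + 2 * ∑ j, ∑ k ∈ Finset.Ioi j, Y j * Y k := by
      rw [Finset.sum_mul_sum]
      have : ∀ j : Fin (n + 1), ∑ k, Y j * Y k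
          = Y j ^ 2 + (∑ k ∈ Finset.Ioi j, Y j * Y k + ∑ k ∈ Finset.Iio j, Y j * Y k) := by
        intro j
        rw [← Finset.sum_disjUnion (Finset.disjoint_Ioi_Iio j),
          Finset.Ioi_disjUnion_Iio j, ← Finset.sum_compl_add_sum {j} (fun k => Y j * Y k)]
        rw [Finset.sum_singleton, sq, add_comm]
      rw [Finset.sum_congr rfl (fun j _ => this j), Finset.sum_add_distrib,
        Finset.sum_add_distrib]
      have hswap : ∑ j, ∑ k ∈ Finset.Iio j, Y j * Y k
          = ∑ j, ∑ k ∈ Finset.Ioi j, Y j * Y k := by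
        rw [Finset.sum_comm' (s' := fun k => Finset.Ioi k) (t' := Finset.univ)
          (by intro j k; simp [Finset.mem_Iio, Finset.mem_Ioi])]
        exact Finset.sum_congr rfl fun k _ => Finset.sum_congr rfl fun j _ => mul_comm _ _
      rw [hswap]; ring
    rw [hc₁, hc₂] at hexp
    linear_combination -hexp
  -- the key power relation
  have hyy : y ^ (n + 2) = -(c₂ * y ^ n) := by
    have : y * (y ^ (n + 1) + c₂ * y ^ (n - 1)) = 0 := by rw [hrel, mul_zero]
    have hy' : y * y ^ (n - 1) = y ^ n := by
      rw [← pow_succ']; congr 1; omega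
    calc y ^ (n + 2) = y * y ^ (n + 1) := by ring
      _ = -(c₂ * (y * y ^ (n - 1))) := by linear_combination this
      _ = -(c₂ * y ^ n) := by rw [hy']
  -- expand each summand
  have hterm : ∀ j, (Y j + y) ^ (n + 2)
      = y ^ (n + 2) + (n + 2 : ℕ) * Y j * y ^ (n + 1) + ((n + 2).choose 2 : ℕ) * Y j ^ 2 * y ^ n := by
    intro j
    have := aux_pow_expand (Y j) y (hY j) (n + 2) (by omega)
    simpa using this
  rw [Finset.sum_congr rfl (fun j _ => hterm j), Finset.sum_add_distrib, Finset.sum_add_distrib,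
    Finset.sum_const, Finset.card_univ, Fintype.card_fin]
  have h1 : ∑ j, (n + 2 : ℕ) * Y j * y ^ (n + 1) = 0 := by
    rw [← Finset.sum_mul, ← Finset.mul_sum, hc₁, mul_zero, zero_mul]
  have h2 : ∑ j, ((n + 2).choose 2 : R) * Y j ^ 2 * y ^ n
      = ((n + 2).choose 2 : R) * -(2 * c₂) * y ^ n := by
    rw [← Finset.sum_mul, ← Finset.mul_sum, hsq]
  have hchoose : ((n + 2).choose 2 : R) * 2 = (n + 2) * (n + 1) := by
    have : (n + 2).choose 2 * 2 = (n + 2) * (n + 1) := by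
      rw [Nat.choose_two_right]
      have h2d : 2 ∣ (n + 2) * (n + 2 - 1) := (Nat.even_mul_pred_self (n + 2)).two_dvd
      rw [Nat.div_mul_cancel h2d]
      congr 1
    calc ((n + 2).choose 2 : R) * 2 = (((n + 2).choose 2 * 2 : ℕ) : R) := by push_cast; ring
      _ = (n + 2) * (n + 1) := by rw [this]; push_cast; ring
  rw [h1, h2, hyy]
  push_cast [nsmul_eq_mul]
  linear_combination (-(c₂ * y ^ n)) * hchoose
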